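/- For any vector x ∈ ℝ^d, any matrix U ∈ ℝ^{d×n}, and any λ > 0, the matrix UUᵀ + λI_d is invertible and xᵀ(UUᵀ + λI_d)⁻¹x = min_{z ∈ ℝⁿ} [ (1/λ)·‖x − Uz‖² + ‖z‖² ], with the minimum attained at z* = (λI_n + UᵀU)⁻¹Uᵀx. -/

import Mathlib

open Matrix


private lemma dot_self_nonneg' {k : ℕ} (v : Fin k → ℝ) : 0 ≤ v ⬝ᵥ v :=
  Finset.sum_nonneg fun i _ => mul_self_nonneg (v i)

private lemma dot_self_pos' {k : ℕ} {v : Fin k → ℝ} (h : v ≠ 0) : 0 < v ⬝ᵥ v := by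
  obtain ⟨i, hi⟩ := Function.ne_iff.1 h
  exact Finset.sum_pos' (fun j _ => mul_self_nonneg (v j))
    ⟨i, Finset.mem_univ i, mul_self_pos.2 hi⟩

private lemma sum_sq_eq_dot' {k : ℕ} (v : Fin k → ℝ) : ∑ i, v i ^ 2 = v ⬝ᵥ v := by
  simp [dotProduct, sq]


/-- For any `x ∈ ℝ^d`, `U ∈ ℝ^{d×n}` and `λ > 0`, the matrix `UUᵀ + λ I_d` is invertible and
`xᵀ(UUᵀ + λI)⁻¹x = min_{z ∈ ℝⁿ} (1/λ)‖x − Uz‖² + ‖z‖²`, attained at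
`z* = (λ I_n + UᵀU)⁻¹ Uᵀ x`. -/
theorem ridge_woodbury_identity (d n : ℕ) (x : Fin d → ℝ) (U : Matrix (Fin d) (Fin n) ℝ)
    (lam : ℝ) (hlam : 0 < lam) :
    IsUnit (U * Uᵀ + lam • (1 : Matrix (Fin d) (Fin d) ℝ)) ∧
    x ⬝ᵥ ((U * Uᵀ + lam • (1 : Matrix (Fin d) (Fin d) ℝ))⁻¹ *ᵥ x) =
      (1 / lam) *
          (∑ i, (x - U *ᵥ ((lam • (1 : Matrix (Fin n) (Fin n) ℝ) + Uᵀ * U)⁻¹ *ᵥ (Uᵀ *ᵥ x))) i ^ 2)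
        + ∑ j, ((lam • (1 : Matrix (Fin n) (Fin n) ℝ) + Uᵀ * U)⁻¹ *ᵥ (Uᵀ *ᵥ x)) j ^ 2 ∧
    ∀ z : Fin n → ℝ,
      x ⬝ᵥ ((U * Uᵀ + lam • (1 : Matrix (Fin d) (Fin d) ℝ))⁻¹ *ᵥ x) ≤
        (1 / lam) * (∑ i, (x - U *ᵥ z) i ^ 2) + ∑ j, z j ^ 2 := by
  have hlam' : lam ≠ 0 := hlam.ne'
  set w : Fin n → ℝ := Uᵀ *ᵥ x with hw
  set B : Matrix (Fin n) (Fin n) ℝ := lam • (1 : Matrix (Fin n) (Fin n) ℝ) + Uᵀ * U with hB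
  set A : Matrix (Fin d) (Fin d) ℝ := U * Uᵀ + lam • (1 : Matrix (Fin d) (Fin d) ℝ) with hA
  set zs : Fin n → ℝ := B⁻¹ *ᵥ w with hzs
  -- B is positive definite, hence invertible
  have hBmv : ∀ v : Fin n → ℝ, B *ᵥ v = lam • v + Uᵀ *ᵥ (U *ᵥ v) := by
    intro v
    rw [hB, add_mulVec, smul_mulVec, one_mulVec, mulVec_mulVec]
  have hdotT : ∀ (u : Fin d → ℝ) (v : Fin n → ℝ), u ⬝ᵥ (U *ᵥ v) = (Uᵀ *ᵥ u) ⬝ᵥ v := by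
    intro u v
    rw [dotProduct_mulVec, mulVec_transpose]
  have hdotT2 : ∀ (u : Fin d → ℝ) (v : Fin n → ℝ), v ⬝ᵥ (Uᵀ *ᵥ u) = (U *ᵥ v) ⬝ᵥ u := by
    intro u v
    rw [dotProduct_mulVec, vecMul_transpose]
  have hBpos : B.PosDef := by
    rw [posDef_iff_dotProduct_mulVec]
    constructor
    · show Bᴴ = B
      rw [conjTranspose_eq_transpose_of_trivial, hB, transpose_add, transpose_smul,
        transpose_one, transpose_mul, transpose_transpose]
    · intro v hv
      have : star v ⬝ᵥ (B *ᵥ v) = lam * (v ⬝ᵥ v) + (U *ᵥ v) ⬝ᵥ (U *ᵥ v) := by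
        rw [star_trivial, hBmv, dotProduct_add, dotProduct_smul, smul_eq_mul, hdotT2]
      rw [this]
      have h1 := dot_self_pos' hv
      have h2 := dot_self_nonneg' (U *ᵥ v)
      nlinarith
  have hBunit : IsUnit B := hBpos.isUnit
  have hBinv : B * B⁻¹ = 1 := mul_nonsing_inv _ ((isUnit_iff_isUnit_det _).1 hBunit)
  have hBz : B *ᵥ zs = w := by rw [hzs, mulVec_mulVec, hBinv, one_mulVec]
  have hUUzs : Uᵀ *ᵥ (U *ᵥ zs) = w - lam • zs := by
    have := hBz; rw [hBmv] at this; linear_combination (norm := module) this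
  -- Explicit inverse for A
  have hAU : A * U = U * B := by
    rw [hA, hB, Matrix.add_mul, Matrix.mul_add, Matrix.smul_mul, Matrix.one_mul,
      Matrix.mul_smul, Matrix.mul_one, Matrix.mul_assoc, add_comm]
  have hright : A * ((1 / lam) • (1 - U * B⁻¹ * Uᵀ)) = 1 := by
    have h1 : A * (U * B⁻¹ * Uᵀ) = U * Uᵀ := by
      rw [← Matrix.mul_assoc, ← Matrix.mul_assoc, hAU, Matrix.mul_assoc U B B⁻¹, hBinv,
        Matrix.mul_one]
    rw [Matrix.mul_smul, mul_sub, mul_one, h1, hA, add_sub_cancel_left, smul_smul,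
      one_div, inv_mul_cancel₀ hlam', one_smul]
  have hAunit : IsUnit A := (isUnit_iff_isUnit_det _).2 (isUnit_det_of_right_inverse hright)
  have hAinv : A⁻¹ = (1 / lam) • (1 - U * B⁻¹ * Uᵀ) := inv_eq_right_inv hright
  have hAx : A⁻¹ *ᵥ x = (1 / lam) • (x - U *ᵥ zs) := by
    rw [hAinv, smul_mulVec, sub_mulVec, one_mulVec, ← mulVec_mulVec, ← mulVec_mulVec,
      ← hw, ← hzs]
  -- scalar dot product facts
  have hdot : ∀ v : Fin n → ℝ, x ⬝ᵥ (U *ᵥ v) = w ⬝ᵥ v := fun v => by rw [hdotT, hw]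
  have hcross : ∀ v : Fin n → ℝ, (U *ᵥ v) ⬝ᵥ (U *ᵥ zs) = v ⬝ᵥ w - lam * (v ⬝ᵥ zs) := by
    intro v
    rw [dotProduct_comm, hdotT, hUUzs, sub_dotProduct, smul_dotProduct, smul_eq_mul,
      dotProduct_comm w v, dotProduct_comm zs v]
  -- the key identity
  have key : ∀ z : Fin n → ℝ,
      (1 / lam) * ((x - U *ᵥ z) ⬝ᵥ (x - U *ᵥ z)) + z ⬝ᵥ z
        = (1 / lam) * ((x - U *ᵥ zs) ⬝ᵥ (x - U *ᵥ zs)) + zs ⬝ᵥ zs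
          + ((1 / lam) * ((U *ᵥ (z - zs)) ⬝ᵥ (U *ᵥ (z - zs))) + (z - zs) ⬝ᵥ (z - zs)) := by
    intro z
    have e1 := hcross z
    have e2 := hcross zs
    have d1 := hdot z
    have d2 := hdot zs
    have c1 : (U *ᵥ z) ⬝ᵥ x = x ⬝ᵥ (U *ᵥ z) := dotProduct_comm _ _
    have c2 : (U *ᵥ zs) ⬝ᵥ x = x ⬝ᵥ (U *ᵥ zs) := dotProduct_comm _ _
    have c3 : (U *ᵥ zs) ⬝ᵥ (U *ᵥ z) = (U *ᵥ z) ⬝ᵥ (U *ᵥ zs) := dotProduct_comm _ _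
    have c4 : zs ⬝ᵥ z = z ⬝ᵥ zs := dotProduct_comm _ _
    have c5 : z ⬝ᵥ w = w ⬝ᵥ z := dotProduct_comm _ _
    have c6 : zs ⬝ᵥ w = w ⬝ᵥ zs := dotProduct_comm _ _
    have c4l : lam * (zs ⬝ᵥ z) = lam * (z ⬝ᵥ zs) := by rw [c4]
    simp only [mulVec_sub, dotProduct_sub, sub_dotProduct]
    field_simp
    linarith [e1, e2, d1, d2, c1, c2, c3, c4, c5, c6, c4l]
  -- value at the minimizer
  have hmin : x ⬝ᵥ (A⁻¹ *ᵥ x)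
      = (1 / lam) * ((x - U *ᵥ zs) ⬝ᵥ (x - U *ᵥ zs)) + zs ⬝ᵥ zs := by
    rw [hAx, dotProduct_smul, smul_eq_mul, dotProduct_sub]
    have e2 := hcross zs
    have d2 := hdot zs
    have c2 : (U *ᵥ zs) ⬝ᵥ x = x ⬝ᵥ (U *ᵥ zs) := dotProduct_comm _ _
    have c6 : zs ⬝ᵥ w = w ⬝ᵥ zs := dotProduct_comm _ _
    simp only [dotProduct_sub, sub_dotProduct]
    field_simp
    linarith [e2, d2, c2, c6]
  refine ⟨hAunit, ?_, ?_⟩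
  · rw [hmin, sum_sq_eq_dot', sum_sq_eq_dot']
  · intro z
    rw [hmin, sum_sq_eq_dot', sum_sq_eq_dot']
    have hk := key z
    have n1 := dot_self_nonneg' (U *ᵥ (z - zs))
    have n2 := dot_self_nonneg' (z - zs)
    have hil : 0 < 1 / lam := by positivity
    nlinarith
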